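/- Let G ∈ ℝ^{M×N} be a zero-sum game matrix with value ρ (i.e., ρ = min_{x ∈ Δ_M} max_{y ∈ Δ_N} xᵀGy). Then there exists a Nash equilibrium (x*, y*) such that (Gy*)_i = ρ for all i ∈ supp(x*), (Gy*)_i > ρ for all i ∉ supp(x*), (Gᵀx*)_j = ρ for all j ∈ supp(y*), and (Gᵀx*)_j < ρ for all j ∉ supp(y*). -/

import Mathlib

/-- The probability simplex in `ℝ^d`. -/
def simplex (d : ℕ) : Set (Fin d → ℝ) := {v | (∀ i, 0 ≤ v i) ∧ ∑ i, v i = 1}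

/-- The bilinear payoff `xᵀ G y`. -/
def payoff {M N : ℕ} (G : Matrix (Fin M) (Fin N) ℝ) (x : Fin M → ℝ) (y : Fin N → ℝ) : ℝ :=
  ∑ i, ∑ j, x i * G i j * y j

section farkas
open Finset
variable {E : Type*} [NormedAddCommGroup E] [InnerProductSpace ℝ E] [FiniteDimensional ℝ E]

/-- The finitely generated cone on `w`. -/
def coneSet {k : ℕ} (w : Fin k → E) : Set E :=
  {x | ∃ c : Fin k → ℝ, (∀ i, 0 ≤ c i) ∧ ∑ i, c i • w i = x}

/-- Conic Carathéodory: reduce to coefficients with linearly independent support. -/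
lemma cara {k : ℕ} (w : Fin k → E) :
    ∀ (m : ℕ) (c : Fin k → ℝ), (∀ i, 0 ≤ c i) →
      ((univ.filter (fun i => c i ≠ 0)).card ≤ m) →
      ∃ c' : Fin k → ℝ, (∀ i, 0 ≤ c' i) ∧ ∑ i, c' i • w i = ∑ i, c i • w i ∧
        LinearIndependent ℝ (fun i : (univ.filter (fun i => c' i ≠ 0) : Finset (Fin k)) => w i) := by
  intro m
  induction m with
  | zero =>
    intro c hc hcard
    refine ⟨c, hc, rfl, ?_⟩
    have : (univ.filter (fun i => c i ≠ 0)) = ∅ := Finset.card_eq_zero.mp (Nat.le_zero.mp hcard)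
    rw [this]
    have : IsEmpty ((∅ : Finset (Fin k)) : Type) := ⟨fun x => absurd x.2 (Finset.notMem_empty _)⟩
    exact linearIndependent_empty_type
  | succ m ih =>
    intro c hc hcard
    set t := (univ.filter (fun i => c i ≠ 0)) with ht
    by_cases hli : LinearIndependent ℝ (fun i : t => w i)
    · exact ⟨c, hc, rfl, hli⟩
    · -- extract a dependence supported in t with a positive coefficient
      obtain ⟨d, hdsupp, hdsum, j₀, hj₀⟩ :
          ∃ d : Fin k → ℝ, (∀ i, d i ≠ 0 → i ∈ t) ∧ ∑ i, d i • w i = 0 ∧ ∃ j, 0 < d j := by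
        obtain ⟨g, hgsum, i₀, hi₀⟩ := Fintype.not_linearIndependent_iff.mp hli
        have key : ∀ (g : t → ℝ), ∑ i : t, g i • w i = 0 →
            ∃ d : Fin k → ℝ, (∀ i, d i ≠ 0 → i ∈ t) ∧ ∑ i, d i • w i = 0 ∧
              ∀ i : t, d i = g i := by
          intro g hg
          classical
          refine ⟨fun i => if h : i ∈ t then g ⟨i, h⟩ else 0, ?_, ?_, ?_⟩
          · intro i hi
            by_contra h
            simp [h] at hi
          · calc ∑ i : Fin k, (if h : i ∈ t then g ⟨i, h⟩ else 0) • w i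
                = ∑ i ∈ t, (if h : i ∈ t then g ⟨i, h⟩ else 0) • w i :=
                  (Finset.sum_subset (Finset.subset_univ t) (fun x _ hx => by simp [hx])).symm
              _ = ∑ i : t, (if h : (i : Fin k) ∈ t then g ⟨i, h⟩ else 0) • w (i : Fin k) :=
                  (Finset.sum_coe_sort t fun i => (if h : i ∈ t then g ⟨i, h⟩ else 0) • w i).symm
              _ = ∑ i : t, g i • w (i : Fin k) := by
                  apply Finset.sum_congr rfl
                  intro i _
                  simp [i.2]
              _ = 0 := hg
          · intro i; simp [i.2]
        rcases lt_trichotomy (g i₀) 0 with hneg | hzero | hpos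
        · obtain ⟨d, h1, h2, h3⟩ := key (-g) (by
            have : ∑ i : t, (-g) i • w i = -∑ i : t, g i • w i := by simp
            rw [this, hgsum, neg_zero])
          exact ⟨d, h1, h2, i₀, by rw [h3 i₀]; simpa using hneg⟩
        · exact absurd hzero hi₀
        · obtain ⟨d, h1, h2, h3⟩ := key g hgsum
          exact ⟨d, h1, h2, i₀, by rw [h3 i₀]; exact hpos⟩
      -- min-ratio step
      classical
      set s := (univ.filter (fun i => 0 < d i)) with hs
      have hj₀s : j₀ ∈ s := by simp [hs, hj₀]
      have hsne : s.Nonempty := ⟨j₀, hj₀s⟩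
      set r := s.inf' hsne (fun i => c i / d i) with hr
      have hr0 : 0 ≤ r := by
        apply Finset.le_inf'
        intro i hi
        have hdi : 0 < d i := by simpa [hs] using hi
        exact div_nonneg (hc i) hdi.le
      obtain ⟨i₁, hi₁s, hi₁⟩ := Finset.exists_mem_eq_inf' hsne (fun i => c i / d i)
      have hdi₁ : 0 < d i₁ := by simpa [hs] using hi₁s
      set c' : Fin k → ℝ := fun i => c i - r * d i with hc'
      have hc'0 : ∀ i, 0 ≤ c' i := by
        intro i
        by_cases hdi : 0 < d i
        · have : r ≤ c i / d i := Finset.inf'_le _ (by simp [hs, hdi])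
          have h2 := (le_div_iff₀ hdi).mp this
          have h3 := hc i
          simp only [hc']; linarith
        · push_neg at hdi
          have h2 : r * d i ≤ 0 := mul_nonpos_of_nonneg_of_nonpos hr0 hdi
          have h3 := hc i
          simp only [hc']; linarith
      have hc'i₁ : c' i₁ = 0 := by
        show c i₁ - r * d i₁ = 0
        rw [hr, hi₁, div_mul_cancel₀ _ (ne_of_gt hdi₁), sub_self]
      have hsub : (univ.filter (fun i => c' i ≠ 0)) ⊆ t.erase i₁ := by
        intro i hi
        simp only [Finset.mem_filter, Finset.mem_univ, true_and] at hi
        rw [Finset.mem_erase]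
        constructor
        · rintro rfl; exact hi hc'i₁
        · by_contra hit
          have hci : c i = 0 := by
            by_contra h; exact hit (by simp [ht, h])
          have hdi : d i = 0 := by
            by_contra h; exact hit (hdsupp i h)
          exact hi (by simp [hc', hci, hdi])
      have hi₁t : i₁ ∈ t := hdsupp i₁ (ne_of_gt hdi₁)
      have hcard' : (univ.filter (fun i => c' i ≠ 0)).card ≤ m := by
        calc (univ.filter (fun i => c' i ≠ 0)).card ≤ (t.erase i₁).card := Finset.card_le_card hsub
        _ = t.card - 1 := Finset.card_erase_of_mem hi₁t
        _ ≤ m := by omega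
      have hsum' : ∑ i, c' i • w i = ∑ i, c i • w i := by
        simp only [hc', sub_smul, Finset.sum_sub_distrib, mul_smul, ← Finset.smul_sum, hdsum,
          smul_zero, sub_zero]
      obtain ⟨c'', h1, h2, h3⟩ := ih c' hc'0 hcard'
      exact ⟨c'', h1, by rw [h2, hsum'], h3⟩

lemma piece_closed {k : ℕ} (w : Fin k → E) (s : Finset (Fin k))
    (hs : LinearIndependent ℝ (fun i : s => w i)) :
    IsClosed ((fun c : s → ℝ => ∑ i : s, c i • w (i : Fin k)) '' {c | ∀ i, 0 ≤ c i}) := by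
  classical
  let f : (s → ℝ) →ₗ[ℝ] E :=
    { toFun := fun c => ∑ i : s, c i • w (i : Fin k)
      map_add' := by intro a b; simp [add_smul, Finset.sum_add_distrib]
      map_smul' := by intro r a; simp [mul_smul, Finset.smul_sum] }
  have hker : LinearMap.ker f = ⊥ := by
    rw [LinearMap.ker_eq_bot']
    intro c hc
    have := Fintype.linearIndependent_iff.mp hs c hc
    funext i
    exact this i
  have hemb := LinearMap.isClosedEmbedding_of_injective (f := f) hker
  have hcl : IsClosed {c : s → ℝ | ∀ i, 0 ≤ c i} := by
    have : {c : s → ℝ | ∀ i, 0 ≤ c i} = ⋂ i, {c : s → ℝ | 0 ≤ c i} := by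
      ext c; simp [Set.mem_iInter]
    rw [this]
    exact isClosed_iInter fun i => isClosed_le continuous_const (continuous_apply i)
  exact hemb.isClosedMap _ hcl

lemma coneSet_closed {k : ℕ} (w : Fin k → E) : IsClosed (coneSet w) := by
  classical
  have hunion : coneSet w = ⋃ (s : Finset (Fin k)),
      ⋃ (_ : LinearIndependent ℝ (fun i : s => w i)),
      ((fun c : s → ℝ => ∑ i : s, c i • w (i : Fin k)) '' {c | ∀ i, 0 ≤ c i}) := by
    ext x
    simp only [Set.mem_iUnion]
    constructor
    · rintro ⟨c, hc, rfl⟩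
      obtain ⟨c', hc'0, hc'sum, hc'li⟩ := cara w k c hc (Finset.card_le_univ _ |>.trans (by simp))
      set t := (Finset.univ.filter (fun i => c' i ≠ 0)) with ht
      refine ⟨t, hc'li, fun i => c' i, fun i => hc'0 i, ?_⟩
      show ∑ i : t, c' (i : Fin k) • w (i : Fin k) = _
      rw [Finset.sum_coe_sort t (fun i => c' i • w i), ← hc'sum]
      exact Finset.sum_subset (Finset.subset_univ t) (fun x _ hx => by
        have : c' x = 0 := by by_contra h; exact hx (by simp [ht, h])
        simp [this])
    · rintro ⟨s, hs, c, hc, rfl⟩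
      refine ⟨fun i => if h : i ∈ s then c ⟨i, h⟩ else 0, fun i => by
        by_cases h : i ∈ s
        · simpa [h] using hc ⟨i, h⟩
        · simp [h], ?_⟩
      calc ∑ i : Fin k, (if h : i ∈ s then c ⟨i, h⟩ else 0) • w i
          = ∑ i ∈ s, (if h : i ∈ s then c ⟨i, h⟩ else 0) • w i :=
            (Finset.sum_subset (Finset.subset_univ s) (fun x _ hx => by simp [hx])).symm
        _ = ∑ i : s, (if h : (i : Fin k) ∈ s then c ⟨i, h⟩ else 0) • w (i : Fin k) :=
            (Finset.sum_coe_sort s fun i => (if h : i ∈ s then c ⟨i, h⟩ else 0) • w i).symm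
        _ = ∑ i : s, c i • w (i : Fin k) := by
            apply Finset.sum_congr rfl
            intro i _
            simp [i.2]
  rw [hunion]
  apply isClosed_iUnion_of_finite
  intro s
  by_cases hs : LinearIndependent ℝ (fun i : s => w i)
  · simpa [hs] using piece_closed w s hs
  · simp [hs]

open RealInnerProductSpace in
lemma farkas_inner {k : ℕ} (w : Fin k → E) (b : E)
    (h : ∀ y : E, (∀ i, 0 ≤ ⟪w i, y⟫) → 0 ≤ ⟪b, y⟫) :
    ∃ c : Fin k → ℝ, (∀ i, 0 ≤ c i) ∧ ∑ i, c i • w i = b := by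
  classical
  by_contra hb
  have hbK : b ∉ coneSet w := fun hbK => hb (by obtain ⟨c, hc, hsum⟩ := hbK; exact ⟨c, hc, hsum⟩)
  let K : ConvexCone ℝ E :=
    { carrier := coneSet w
      smul_mem' := by
        rintro r hr x ⟨c, hc, rfl⟩
        exact ⟨fun i => r * c i, fun i => mul_nonneg hr.le (hc i), by
          simp [mul_smul, Finset.smul_sum]⟩
      add_mem' := by
        rintro x ⟨c, hc, rfl⟩ y ⟨c', hc', rfl⟩
        exact ⟨fun i => c i + c' i, fun i => add_nonneg (hc i) (hc' i), by
          simp [add_smul, Finset.sum_add_distrib]⟩ }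
  have hne : (K : Set E).Nonempty := ⟨0, ⟨fun _ => 0, fun _ => le_refl _, by simp⟩⟩
  have hcl : IsClosed (K : Set E) := coneSet_closed w
  let C : ProperCone ℝ E :=
    { carrier := coneSet w
      add_mem' := fun hx hy => K.add_mem' hx hy
      zero_mem' := ⟨fun _ => 0, fun _ => le_refl _, by simp⟩
      smul_mem' := by
        rintro r x ⟨c, hc, rfl⟩
        show ∃ d : Fin k → ℝ, (∀ i, 0 ≤ d i) ∧ ∑ i, d i • w i = (r : ℝ) • ∑ i, c i • w i
        exact ⟨fun i => (r : ℝ) * c i, fun i => mul_nonneg r.2 (hc i), by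
          simp [mul_smul, Finset.smul_sum]⟩
      isClosed' := hcl }
  obtain ⟨y, hy1, hy2⟩ := ProperCone.hyperplane_separation' C (x₀ := b) hbK
  have hwy : ∀ i, 0 ≤ ⟪w i, y⟫ := by
    intro i
    apply hy1
    show w i ∈ coneSet w
    exact ⟨fun i' => if i' = i then 1 else 0, fun i' => by positivity, by simp⟩
  have := h y hwy
  rw [real_inner_comm] at hy2 this
  linarith

/-- Farkas' lemma in coordinates. -/
lemma farkas {n k : ℕ} (w : Fin k → (Fin n → ℝ)) (b : Fin n → ℝ)
    (h : ∀ y : Fin n → ℝ, (∀ i, 0 ≤ ∑ t, w i t * y t) → 0 ≤ ∑ t, b t * y t) :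
    ∃ c : Fin k → ℝ, (∀ i, 0 ≤ c i) ∧ ∀ t, b t = ∑ i, c i * w i t := by
  classical
  let W : Fin k → EuclideanSpace ℝ (Fin n) := fun i => WithLp.toLp 2 (w i)
  let B : EuclideanSpace ℝ (Fin n) := WithLp.toLp 2 b
  have h' : ∀ y : EuclideanSpace ℝ (Fin n),
      (∀ i, 0 ≤ (inner ℝ (W i) y : ℝ)) → 0 ≤ (inner ℝ B y : ℝ) := by
    intro y hy
    have hy' : ∀ i, 0 ≤ ∑ t, w i t * y t := by
      intro i
      have := hy i
      simpa [W, PiLp.inner_apply, RCLike.inner_apply, mul_comm] using this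
    have := h (fun t => y t) hy'
    simpa [B, PiLp.inner_apply, RCLike.inner_apply, mul_comm] using this
  obtain ⟨c, hc, hsum⟩ := farkas_inner W B h'
  refine ⟨c, hc, fun t => ?_⟩
  have hm := map_sum (EuclideanSpace.proj t : EuclideanSpace ℝ (Fin n) →L[ℝ] ℝ)
    (fun i => c i • W i) Finset.univ
  rw [hsum] at hm
  calc b t = (EuclideanSpace.proj t : EuclideanSpace ℝ (Fin n) →L[ℝ] ℝ) B := rfl
    _ = ∑ i, (EuclideanSpace.proj t : EuclideanSpace ℝ (Fin n) →L[ℝ] ℝ) (c i • W i) := hm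
    _ = ∑ i, c i * w i t := by simp [W, PiLp.proj_apply, smul_eq_mul]

end farkas

section game
variable {M N : ℕ} (G : Matrix (Fin M) (Fin N) ℝ)

lemma payoff_row (x : Fin M → ℝ) (y : Fin N → ℝ) :
    payoff G x y = ∑ i, x i * ∑ j, G i j * y j := by
  unfold payoff
  apply Finset.sum_congr rfl
  intro i _
  rw [Finset.mul_sum]
  apply Finset.sum_congr rfl
  intro j _
  ring

lemma payoff_col (x : Fin M → ℝ) (y : Fin N → ℝ) :
    payoff G x y = ∑ j, (∑ i, x i * G i j) * y j := by
  unfold payoff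
  rw [Finset.sum_comm]
  apply Finset.sum_congr rfl
  intro j _
  rw [Finset.sum_mul]

lemma vertex_mem {d : ℕ} (j : Fin d) : (fun t => if t = j then (1:ℝ) else 0) ∈ simplex d := by
  constructor
  · intro i
    simp only []
    split <;> norm_num
  · simp

lemma normalize_mem {d : ℕ} (y : Fin d → ℝ) (hy : ∀ i, 0 ≤ y i) (hS : 0 < ∑ i, y i) :
    (fun i => y i / (∑ i, y i)) ∈ simplex d := by
  refine ⟨fun i => div_nonneg (hy i) hS.le, ?_⟩
  rw [← Finset.sum_div, div_self (ne_of_gt hS)]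

lemma simplex_compact {d : ℕ} : IsCompact (simplex d) := by
  have : simplex d = stdSimplex ℝ (Fin d) := rfl
  rw [this]
  exact isCompact_stdSimplex _ _

end game

section value
variable {M N : ℕ} (hM : 0 < M) (hN : 0 < N) (G : Matrix (Fin M) (Fin N) ℝ)

/-- the best-response value for the column player -/
noncomputable def gval (hN : 0 < N) (G : Matrix (Fin M) (Fin N) ℝ) (x : Fin M → ℝ) : ℝ :=
  Finset.univ.sup' (Finset.univ_nonempty_iff.mpr ⟨⟨0, hN⟩⟩) (fun j => ∑ i, x i * G i j)

lemma sSup_payoff_eq (x : Fin M → ℝ) :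
    sSup ((fun y => payoff G x y) '' simplex N) = gval hN G x := by
  apply IsGreatest.csSup_eq
  constructor
  · obtain ⟨j₀, _, hj₀⟩ := Finset.exists_mem_eq_sup' (Finset.univ_nonempty_iff.mpr ⟨⟨0, hN⟩⟩)
      (fun j => ∑ i, x i * G i j)
    refine ⟨fun t => if t = j₀ then 1 else 0, vertex_mem j₀, ?_⟩
    show payoff G x (fun t => if t = j₀ then 1 else 0) = gval hN G x
    rw [payoff_col, gval, hj₀]
    simp [mul_ite, Finset.sum_ite_eq']
  · rintro r ⟨y, hy, rfl⟩
    show payoff G x y ≤ gval hN G x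
    rw [payoff_col]
    have key : ∀ j, ∑ i, x i * G i j ≤ gval hN G x := fun j => by
      unfold gval
      exact Finset.le_sup' (fun j => ∑ i, x i * G i j) (Finset.mem_univ j)
    calc ∑ j, (∑ i, x i * G i j) * y j ≤ ∑ j, gval hN G x * y j := by
          apply Finset.sum_le_sum
          intro j _
          exact mul_le_mul_of_nonneg_right (key j) (hy.1 j)
      _ = gval hN G x := by rw [← Finset.mul_sum, hy.2, mul_one]

lemma gval_continuous : Continuous (gval hN G) := by
  have h1 : Continuous (Finset.univ.sup' (Finset.univ_nonempty_iff.mpr ⟨⟨0, hN⟩⟩)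
      (fun j => fun x : Fin M → ℝ => ∑ i, x i * G i j)) :=
    Continuous.finset_sup' _ (fun j _ =>
      continuous_finset_sum _ (fun i _ => (continuous_apply i).mul continuous_const))
  have h2 : gval hN G = Finset.univ.sup' (Finset.univ_nonempty_iff.mpr ⟨⟨0, hN⟩⟩)
      (fun j => fun x : Fin M → ℝ => ∑ i, x i * G i j) := by
    funext x
    rw [gval, Finset.sup'_apply]
  rw [h2]
  exact h1

include hM in
lemma exists_min (ρ : ℝ)
    (hρ : ρ = sInf ((fun x => sSup ((fun y => payoff G x y) '' simplex N)) '' simplex M)) :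
    ∃ xs ∈ simplex M, gval hN G xs = ρ ∧ ∀ x ∈ simplex M, ρ ≤ gval hN G x := by
  have hne : (simplex M).Nonempty := ⟨_, vertex_mem ⟨0, hM⟩⟩
  obtain ⟨xs, hxs, hmin⟩ := (simplex_compact (d := M)).exists_isMinOn hne
    (gval_continuous hN G).continuousOn
  have himg : ((fun x => sSup ((fun y => payoff G x y) '' simplex N)) '' simplex M)
      = gval hN G '' simplex M :=
    Set.image_congr (fun x _ => sSup_payoff_eq hN G x)
  have hleast : IsLeast (gval hN G '' simplex M) (gval hN G xs) := by
    constructor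
    · exact ⟨xs, hxs, rfl⟩
    · rintro r ⟨x, hx, rfl⟩
      exact hmin hx
  have : ρ = gval hN G xs := by rw [hρ, himg, hleast.csInf_eq]
  exact ⟨xs, hxs, this.symm, fun x hx => this ▸ hmin hx⟩

end value

section claims
open Finset
variable {M N : ℕ}

lemma sum_div_mul {d : ℕ} (u : Fin d → ℝ) (S : ℝ) (v : Fin d → ℝ) :
    ∑ i, (u i / S) * v i = (∑ i, u i * v i) / S := by
  rw [Finset.sum_div]
  apply Finset.sum_congr rfl
  intro i _
  rw [div_mul_eq_mul_div]

lemma mul_div_sum {d : ℕ} (u : Fin d → ℝ) (S : ℝ) (v : Fin d → ℝ) :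
    ∑ i, v i * (u i / S) = (∑ i, v i * u i) / S := by
  rw [Finset.sum_div]
  apply Finset.sum_congr rfl
  intro i _
  rw [mul_div_assoc]

lemma colA (G : Matrix (Fin M) (Fin N) ℝ) (ρ : ℝ) (x : Fin M → ℝ) (hx : ∑ i, x i = 1)
    (j : Fin N) : ∑ i, x i * (G i j - ρ) = ∑ i, x i * G i j - ρ := by
  simp [mul_sub, Finset.sum_sub_distrib, ← Finset.sum_mul, hx]

lemma rowA (G : Matrix (Fin M) (Fin N) ℝ) (ρ : ℝ) (y : Fin N → ℝ) (hy : ∑ j, y j = 1)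
    (i : Fin M) : ∑ j, (G i j - ρ) * y j = ∑ j, G i j * y j - ρ := by
  simp [sub_mul, Finset.sum_sub_distrib, ← Finset.mul_sum, hy]

lemma exists_optY (hM : 0 < M) (hN : 0 < N) (G : Matrix (Fin M) (Fin N) ℝ) (ρ : ℝ)
    (hlb : ∀ x ∈ simplex M, ρ ≤ gval hN G x) :
    ∃ y ∈ simplex N, ∀ i, 0 ≤ ∑ j, (G i j - ρ) * y j := by
  classical
  by_contra hno
  push_neg at hno
  -- Farkas setup
  set w : Fin (N + M) → (Fin N → ℝ) :=
    Fin.append (fun (j : Fin N) (t : Fin N) => if t = j then (1:ℝ) else 0)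
      (fun (i : Fin M) (t : Fin N) => G i t - ρ) with hw
  have hyp : ∀ y : Fin N → ℝ, (∀ l, 0 ≤ ∑ t, w l t * y t) →
      0 ≤ ∑ t, (fun _ => (-1:ℝ)) t * y t := by
    intro y hy
    have hyn : ∀ j, 0 ≤ y j := fun j => by
      have h := hy (Fin.castAdd M j)
      rw [hw, Fin.append_left] at h
      simpa [ite_mul, Finset.sum_ite_eq'] using h
    have hyr : ∀ i, 0 ≤ ∑ t, (G i t - ρ) * y t := fun i => by
      have h := hy (Fin.natAdd N i)
      rwa [hw, Fin.append_right] at h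
    show 0 ≤ ∑ t, (-1 : ℝ) * y t
    have he : ∑ t, (-1:ℝ) * y t = -(∑ t, y t) := by simp
    rw [he, neg_nonneg]
    by_contra hS'
    push_neg at hS'
    obtain ⟨i, hi⟩ := hno _ (normalize_mem y hyn hS')
    rw [mul_div_sum] at hi
    exact absurd hi (not_lt.mpr (div_nonneg (hyr i) (le_of_lt hS')))
  obtain ⟨c, hc, hbc⟩ := farkas w (fun _ => (-1 : ℝ)) hyp
  · -- conclusion
    set u : Fin M → ℝ := fun i => c (Fin.natAdd N i) with hu
    have key : ∀ t, ∑ i, u i * (G i t - ρ) ≤ -1 := by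
      intro t
      have h := hbc t
      rw [Fin.sum_univ_add] at h
      simp only [hw, Fin.append_left, Fin.append_right] at h
      rw [show (∑ (j : Fin N), c (Fin.castAdd M j) * if t = j then (1:ℝ) else 0)
          = c (Fin.castAdd M t) by simp [mul_ite, Finset.sum_ite_eq']] at h
      have := hc (Fin.castAdd M t)
      rw [hu]
      linarith
    have hS0 : 0 ≤ ∑ i, u i := Finset.sum_nonneg (fun i _ => hc _)
    have hS : 0 < ∑ i, u i := by
      rcases hS0.eq_or_lt with h | h
      · exfalso
        have hz : ∀ i ∈ Finset.univ, u i = 0 :=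
          (Finset.sum_eq_zero_iff_of_nonneg (fun i _ => hc _)).mp h.symm
        have := key ⟨0, hN⟩
        rw [Finset.sum_eq_zero (fun i hi => by rw [hz i hi, zero_mul])] at this
        linarith
      · exact h
    have hxmem := normalize_mem u (fun i => hc _) hS
    have hle := hlb _ hxmem
    obtain ⟨j, _, hj⟩ := Finset.exists_mem_eq_sup' (Finset.univ_nonempty_iff.mpr ⟨⟨0, hN⟩⟩)
      (fun j => ∑ i, (u i / (∑ i, u i)) * G i j)
    rw [gval, hj] at hle
    have h1 : ∑ i, (u i / (∑ i, u i)) * (G i j - ρ) = (∑ i, u i * (G i j - ρ)) / (∑ i, u i) :=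
      sum_div_mul _ _ _
    have h2 := colA G ρ _ (normalize_mem u (fun i => hc _) hS).2 j
    have h4 : (∑ i, u i * (G i j - ρ)) / (∑ i, u i) < 0 :=
      div_neg_of_neg_of_pos (lt_of_le_of_lt (key j) (by norm_num)) hS
    rw [← h1, h2] at h4
    linarith

lemma sum_comm_mul {d : ℕ} (f g : Fin d → ℝ) : ∑ i, f i * g i = ∑ i, g i * f i :=
  Finset.sum_congr rfl (fun i _ => mul_comm _ _)

lemma strict_row (hN : 0 < N) (G : Matrix (Fin M) (Fin N) ℝ) (ρ : ℝ) (i₀ : Fin M) :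
    (∃ x ∈ simplex M, (∀ j, ∑ i, x i * (G i j - ρ) ≤ 0) ∧ 0 < x i₀) ∨
    (∃ y ∈ simplex N, (∀ i, 0 ≤ ∑ j, (G i j - ρ) * y j) ∧ 0 < ∑ j, (G i₀ j - ρ) * y j) := by
  classical
  by_cases h2 : ∃ y ∈ simplex N, (∀ i, 0 ≤ ∑ j, (G i j - ρ) * y j) ∧
      0 < ∑ j, (G i₀ j - ρ) * y j
  · exact Or.inr h2
  push_neg at h2
  left
  set w : Fin (N + M) → (Fin N → ℝ) :=
    Fin.append (fun (j : Fin N) (t : Fin N) => if t = j then (1:ℝ) else 0)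
      (fun (i : Fin M) (t : Fin N) => G i t - ρ) with hw
  have hyp : ∀ y : Fin N → ℝ, (∀ l, 0 ≤ ∑ t, w l t * y t) →
      0 ≤ ∑ t, (fun t => -(G i₀ t - ρ)) t * y t := by
    intro y hy
    have hyn : ∀ j, 0 ≤ y j := fun j => by
      have h := hy (Fin.castAdd M j)
      rw [hw, Fin.append_left] at h
      simpa [ite_mul, Finset.sum_ite_eq'] using h
    have hyr : ∀ i, 0 ≤ ∑ t, (G i t - ρ) * y t := fun i => by
      have h := hy (Fin.natAdd N i)
      rwa [hw, Fin.append_right] at h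
    show 0 ≤ ∑ t, -(G i₀ t - ρ) * y t
    have he : ∑ t, -(G i₀ t - ρ) * y t = -(∑ t, (G i₀ t - ρ) * y t) := by
      rw [← Finset.sum_neg_distrib]
      exact Finset.sum_congr rfl (fun t _ => by ring)
    rw [he, neg_nonneg]
    have hS0 : 0 ≤ ∑ t, y t := Finset.sum_nonneg (fun t _ => hyn t)
    rcases hS0.eq_or_lt with hS | hS
    · have hz : ∀ t ∈ Finset.univ, y t = 0 :=
        (Finset.sum_eq_zero_iff_of_nonneg (fun t _ => hyn t)).mp hS.symm
      rw [Finset.sum_eq_zero (fun t ht => by rw [hz t ht, mul_zero])]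
    · have hmem := normalize_mem y hyn hS
      have hcond : ∀ i, 0 ≤ ∑ j, (G i j - ρ) * (y j / (∑ t, y t)) := fun i => by
        rw [mul_div_sum]
        exact div_nonneg (hyr i) hS.le
      have hle := h2 _ hmem hcond
      rw [mul_div_sum] at hle
      have := div_mul_cancel₀ (∑ j, (G i₀ j - ρ) * y j) (ne_of_gt hS)
      nlinarith [mul_nonpos_of_nonpos_of_nonneg hle hS.le]
  obtain ⟨c, hc, hbc⟩ := farkas w (fun t => -(G i₀ t - ρ)) hyp
  set u : Fin M → ℝ := fun i => c (Fin.natAdd N i) with hu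
  set v : Fin M → ℝ := fun i => u i + (if i = i₀ then 1 else 0) with hv
  have hv0 : ∀ i, 0 ≤ v i := fun i => by
    rw [hv]
    have := hc (Fin.natAdd N i)
    dsimp only
    split <;> simp only [hu] <;> linarith
  have hvi₀ : 1 ≤ v i₀ := by
    rw [hv]
    have := hc (Fin.natAdd N i₀)
    norm_num [hu]
    linarith
  have key : ∀ t, ∑ i, v i * (G i t - ρ) ≤ 0 := by
    intro t
    have h := hbc t
    rw [Fin.sum_univ_add] at h
    simp only [hw, Fin.append_left, Fin.append_right] at h
    rw [show (∑ (j : Fin N), c (Fin.castAdd M j) * if t = j then (1:ℝ) else 0)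
        = c (Fin.castAdd M t) by simp [mul_ite, Finset.sum_ite_eq']] at h
    have hsplit : ∑ i, v i * (G i t - ρ)
        = (∑ i, u i * (G i t - ρ)) + (G i₀ t - ρ) := by
      rw [hv]
      simp only [add_mul, Finset.sum_add_distrib]
      congr 1
      simp [ite_mul, Finset.sum_ite_eq']
    have := hc (Fin.castAdd M t)
    rw [hsplit, hu]
    linarith
  have hS : 0 < ∑ i, v i := by
    have : (1:ℝ) ≤ ∑ i, v i :=
      le_trans hvi₀ (Finset.single_le_sum (fun i _ => hv0 i) (Finset.mem_univ i₀))
    linarith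
  refine ⟨fun i => v i / (∑ i, v i), normalize_mem v hv0 hS, ?_, ?_⟩
  · intro j
    rw [sum_div_mul]
    exact div_nonpos_of_nonpos_of_nonneg (key j) hS.le
  · exact div_pos (lt_of_lt_of_le one_pos hvi₀) hS

lemma strict_col (hM : 0 < M) (G : Matrix (Fin M) (Fin N) ℝ) (ρ : ℝ) (j₀ : Fin N) :
    (∃ y ∈ simplex N, (∀ i, 0 ≤ ∑ j, (G i j - ρ) * y j) ∧ 0 < y j₀) ∨
    (∃ x ∈ simplex M, (∀ j, ∑ i, x i * (G i j - ρ) ≤ 0) ∧ ∑ i, x i * (G i j₀ - ρ) < 0) := by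
  classical
  by_cases h2 : ∃ x ∈ simplex M, (∀ j, ∑ i, x i * (G i j - ρ) ≤ 0) ∧
      ∑ i, x i * (G i j₀ - ρ) < 0
  · exact Or.inr h2
  push_neg at h2
  left
  set w : Fin (M + N) → (Fin M → ℝ) :=
    Fin.append (fun (i : Fin M) (s : Fin M) => if s = i then (1:ℝ) else 0)
      (fun (j : Fin N) (s : Fin M) => -(G s j - ρ)) with hw
  have hyp : ∀ x : Fin M → ℝ, (∀ l, 0 ≤ ∑ s, w l s * x s) →
      0 ≤ ∑ s, (fun s => G s j₀ - ρ) s * x s := by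
    intro x hx
    have hxn : ∀ i, 0 ≤ x i := fun i => by
      have h := hx (Fin.castAdd N i)
      rw [hw, Fin.append_left] at h
      simpa [ite_mul, Finset.sum_ite_eq'] using h
    have hxc : ∀ j, ∑ s, x s * (G s j - ρ) ≤ 0 := fun j => by
      have h := hx (Fin.natAdd M j)
      rw [hw, Fin.append_right] at h
      have he : ∑ s, -(G s j - ρ) * x s = -(∑ s, x s * (G s j - ρ)) := by
        rw [← Finset.sum_neg_distrib]
        exact Finset.sum_congr rfl (fun s _ => by ring)
      rw [he, neg_nonneg] at h
      exact h
    show 0 ≤ ∑ s, (G s j₀ - ρ) * x s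
    rw [sum_comm_mul]
    have hS0 : 0 ≤ ∑ s, x s := Finset.sum_nonneg (fun s _ => hxn s)
    rcases hS0.eq_or_lt with hS | hS
    · have hz : ∀ s ∈ Finset.univ, x s = 0 :=
        (Finset.sum_eq_zero_iff_of_nonneg (fun s _ => hxn s)).mp hS.symm
      rw [Finset.sum_eq_zero (fun s hs => by rw [hz s hs, zero_mul])]
    · have hmem := normalize_mem x hxn hS
      have hcond : ∀ j, ∑ s, (x s / (∑ s, x s)) * (G s j - ρ) ≤ 0 := fun j => by
        rw [sum_div_mul]
        exact div_nonpos_of_nonpos_of_nonneg (hxc j) hS.le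
      have hle := h2 _ hmem hcond
      rw [sum_div_mul] at hle
      nlinarith [div_mul_cancel₀ (∑ s, x s * (G s j₀ - ρ)) (ne_of_gt hS)]
  obtain ⟨c, hc, hbc⟩ := farkas w (fun s => G s j₀ - ρ) hyp
  set u : Fin N → ℝ := fun j => c (Fin.natAdd M j) with hu
  set v : Fin N → ℝ := fun j => u j + (if j = j₀ then 1 else 0) with hv
  have hv0 : ∀ j, 0 ≤ v j := fun j => by
    rw [hv]
    have := hc (Fin.natAdd M j)
    dsimp only
    split <;> simp only [hu] <;> linarith
  have hvj₀ : 1 ≤ v j₀ := by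
    rw [hv]
    have := hc (Fin.natAdd M j₀)
    norm_num [hu]
    linarith
  have key : ∀ s, 0 ≤ ∑ j, (G s j - ρ) * v j := by
    intro s
    have h := hbc s
    rw [Fin.sum_univ_add] at h
    simp only [hw, Fin.append_left, Fin.append_right] at h
    rw [show (∑ (i : Fin M), c (Fin.castAdd N i) * if s = i then (1:ℝ) else 0)
        = c (Fin.castAdd N s) by simp [mul_ite, Finset.sum_ite_eq']] at h
    have he : ∑ (j : Fin N), c (Fin.natAdd M j) * -(G s j - ρ)
        = -(∑ j, (G s j - ρ) * u j) := by
      rw [← Finset.sum_neg_distrib]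
      apply Finset.sum_congr rfl
      intro j _
      rw [hu]
      ring
    rw [he] at h
    have hsplit : ∑ j, (G s j - ρ) * v j
        = (∑ j, (G s j - ρ) * u j) + (G s j₀ - ρ) := by
      rw [hv]
      simp only [mul_add, Finset.sum_add_distrib]
      congr 1
      simp [mul_ite, Finset.sum_ite_eq']
    have := hc (Fin.castAdd N s)
    rw [hsplit]
    linarith
  have hS : 0 < ∑ j, v j := by
    have : (1:ℝ) ≤ ∑ j, v j :=
      le_trans hvj₀ (Finset.single_le_sum (fun j _ => hv0 j) (Finset.mem_univ j₀))
    linarith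
  refine ⟨fun j => v j / (∑ j, v j), normalize_mem v hv0 hS, ?_, ?_⟩
  · intro i
    rw [mul_div_sum]
    exact div_nonneg (key i) hS.le
  · exact div_pos (lt_of_lt_of_le one_pos hvj₀) hS

end claims

section assemble
open Finset
variable {M N : ℕ}

lemma avg_mul {d e : ℕ} (f : Fin e → Fin d → ℝ) (g : Fin d → ℝ) (K : ℝ) :
    ∑ t, ((∑ a, f a t) / K) * g t = (∑ a, ∑ t, f a t * g t) / K := by
  calc ∑ t, ((∑ a, f a t)/K) * g t = (∑ t, (∑ a, f a t) * g t)/K := sum_div_mul _ _ _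
    _ = (∑ t, ∑ a, f a t * g t)/K := by
        congr 1
        exact Finset.sum_congr rfl (fun t _ => Finset.sum_mul _ _ _)
    _ = (∑ a, ∑ t, f a t * g t)/K := by rw [Finset.sum_comm]

lemma avg_mul' {d e : ℕ} (f : Fin e → Fin d → ℝ) (g : Fin d → ℝ) (K : ℝ) :
    ∑ t, g t * ((∑ a, f a t) / K) = (∑ a, ∑ t, g t * f a t) / K := by
  calc ∑ t, g t * ((∑ a, f a t)/K) = (∑ t, g t * (∑ a, f a t))/K := mul_div_sum _ _ _
    _ = (∑ t, ∑ a, g t * f a t)/K := by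
        congr 1
        exact Finset.sum_congr rfl (fun t _ => Finset.mul_sum _ _ _)
    _ = (∑ a, ∑ t, g t * f a t)/K := by rw [Finset.sum_comm]

lemma payoff_shift (G : Matrix (Fin M) (Fin N) ℝ) (ρ : ℝ) (x : Fin M → ℝ) (y : Fin N → ℝ)
    (hx : ∑ i, x i = 1) (hy : ∑ j, y j = 1) :
    payoff (fun i j => G i j - ρ) x y = payoff G x y - ρ := by
  rw [payoff_col (fun i j => G i j - ρ), payoff_col]
  calc ∑ j, (∑ i, x i * ((fun i j => G i j - ρ) i j)) * y j
      = ∑ j, ((∑ i, x i * G i j) - ρ) * y j := by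
        apply Finset.sum_congr rfl
        intro j _
        rw [show (∑ i, x i * ((fun i j => G i j - ρ) i j)) = ∑ i, x i * (G i j - ρ) from rfl,
          colA G ρ x hx j]
    _ = ∑ j, (∑ i, x i * G i j) * y j - ρ * ∑ j, y j := by
        simp [sub_mul, Finset.sum_sub_distrib, Finset.mul_sum]
    _ = ∑ j, (∑ i, x i * G i j) * y j - ρ := by rw [hy, mul_one]

end assemble

/-- For a matrix game with value `ρ` there exists a Nash equilibrium `(x*, y*)`
with `(Gy*)_i = ρ` on `supp x*`, `(Gy*)_i > ρ` off `supp x*`,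
`(Gᵀx*)_j = ρ` on `supp y*`, and `(Gᵀx*)_j < ρ` off `supp y*`. -/
theorem stmt12 (M N : ℕ) (hM : 0 < M) (hN : 0 < N)
    (G : Matrix (Fin M) (Fin N) ℝ) (ρ : ℝ)
    (hρ : ρ = sInf ((fun x => sSup ((fun y => payoff G x y) '' simplex N)) '' simplex M)) :
    ∃ xs ∈ simplex M, ∃ ys ∈ simplex N,
      (∀ x ∈ simplex M, ∀ y ∈ simplex N,
        payoff G xs y ≤ payoff G xs ys ∧ payoff G xs ys ≤ payoff G x ys) ∧
      (∀ i, 0 < xs i → ∑ j, G i j * ys j = ρ) ∧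
      (∀ i, xs i = 0 → ρ < ∑ j, G i j * ys j) ∧
      (∀ j, 0 < ys j → ∑ i, G i j * xs i = ρ) ∧
      (∀ j, ys j = 0 → ∑ i, G i j * xs i < ρ) := by
  classical
  obtain ⟨xs0, hxs0, hgxs0, hlb⟩ := exists_min hM hN G ρ hρ
  have hxs0c : ∀ j, ∑ i, xs0 i * (G i j - ρ) ≤ 0 := by
    intro j
    rw [colA G ρ xs0 hxs0.2 j]
    have h1 : ∑ i, xs0 i * G i j ≤ gval hN G xs0 := by
      unfold gval
      exact Finset.le_sup' (fun j => ∑ i, xs0 i * G i j) (Finset.mem_univ j)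
    rw [hgxs0] at h1
    linarith
  obtain ⟨y0, hy0, hy0c⟩ := exists_optY hM hN G ρ hlb
  have hpairR : ∀ i : Fin M, ∃ x y, x ∈ simplex M ∧ (∀ j, ∑ i', x i' * (G i' j - ρ) ≤ 0) ∧
      y ∈ simplex N ∧ (∀ i', 0 ≤ ∑ j, (G i' j - ρ) * y j) ∧
      (0 < x i ∨ 0 < ∑ j, (G i j - ρ) * y j) := by
    intro i
    rcases strict_row hN G ρ i with ⟨x, hx, hxc, hxi⟩ | ⟨y, hy, hyc, hyi⟩
    · exact ⟨x, y0, hx, hxc, hy0, hy0c, Or.inl hxi⟩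
    · exact ⟨xs0, y, hxs0, hxs0c, hy, hyc, Or.inr hyi⟩
  have hpairC : ∀ j : Fin N, ∃ x y, x ∈ simplex M ∧ (∀ j', ∑ i, x i * (G i j' - ρ) ≤ 0) ∧
      y ∈ simplex N ∧ (∀ i, 0 ≤ ∑ j', (G i j' - ρ) * y j') ∧
      (0 < y j ∨ ∑ i, x i * (G i j - ρ) < 0) := by
    intro j
    rcases strict_col hM G ρ j with ⟨y, hy, hyc, hyj⟩ | ⟨x, hx, hxc, hxj⟩
    · exact ⟨xs0, y, hxs0, hxs0c, hy, hyc, Or.inl hyj⟩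
    · exact ⟨x, y0, hx, hxc, hy0, hy0c, Or.inr hxj⟩
  choose px py hpx hpxc hpy hpyc hkeyR using hpairR
  choose qx qy hqx hqxc hqy hqyc hkeyC using hpairC
  set K : ℝ := (M : ℝ) + N with hK
  have hK0 : 0 < K := by
    rw [hK]
    have h1 : (1:ℝ) ≤ M := by exact_mod_cast hM
    have h2 : (0:ℝ) ≤ N := by positivity
    linarith
  set xh : Fin M → ℝ := fun i' => (∑ i, px i i' + ∑ j, qx j i') / K with hxh
  set yh : Fin N → ℝ := fun j' => (∑ i, py i j' + ∑ j, qy j j') / K with hyh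
  -- membership
  have hxhmem : xh ∈ simplex M := by
    constructor
    · intro i'
      apply div_nonneg _ hK0.le
      exact add_nonneg (Finset.sum_nonneg fun a _ => (hpx a).1 i')
        (Finset.sum_nonneg fun a _ => (hqx a).1 i')
    · show ∑ i', (∑ i, px i i' + ∑ j, qx j i') / K = 1
      rw [← Finset.sum_div, Finset.sum_add_distrib]
      have h1 : ∑ i' : Fin M, ∑ i : Fin M, px i i' = (M:ℝ) := by
        rw [Finset.sum_comm]
        calc ∑ i : Fin M, ∑ i' : Fin M, px i i' = ∑ i : Fin M, (1:ℝ) :=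
              Finset.sum_congr rfl (fun i _ => (hpx i).2)
          _ = M := by simp
      have h2 : ∑ i' : Fin M, ∑ j : Fin N, qx j i' = (N:ℝ) := by
        rw [Finset.sum_comm]
        calc ∑ j : Fin N, ∑ i' : Fin M, qx j i' = ∑ j : Fin N, (1:ℝ) :=
              Finset.sum_congr rfl (fun j _ => (hqx j).2)
          _ = N := by simp
      rw [h1, h2, ← hK, div_self (ne_of_gt hK0)]
  have hyhmem : yh ∈ simplex N := by
    constructor
    · intro j'
      apply div_nonneg _ hK0.le
      exact add_nonneg (Finset.sum_nonneg fun a _ => (hpy a).1 j')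
        (Finset.sum_nonneg fun a _ => (hqy a).1 j')
    · show ∑ j', (∑ i, py i j' + ∑ j, qy j j') / K = 1
      rw [← Finset.sum_div, Finset.sum_add_distrib]
      have h1 : ∑ j' : Fin N, ∑ i : Fin M, py i j' = (M:ℝ) := by
        rw [Finset.sum_comm]
        calc ∑ i : Fin M, ∑ j' : Fin N, py i j' = ∑ i : Fin M, (1:ℝ) :=
              Finset.sum_congr rfl (fun i _ => (hpy i).2)
          _ = M := by simp
      have h2 : ∑ j' : Fin N, ∑ j : Fin N, qy j j' = (N:ℝ) := by
        rw [Finset.sum_comm]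
        calc ∑ j : Fin N, ∑ j' : Fin N, qy j j' = ∑ j : Fin N, (1:ℝ) :=
              Finset.sum_congr rfl (fun j _ => (hqy j).2)
          _ = N := by simp
      rw [h1, h2, ← hK, div_self (ne_of_gt hK0)]
  -- splitting sums over the averages
  have splitX : ∀ b : Fin M → ℝ, ∑ i', xh i' * b i'
      = (∑ a, ∑ i', px a i' * b i') / K + (∑ a, ∑ i', qx a i' * b i') / K := by
    intro b
    have h : ∀ i', xh i' * b i'
        = ((∑ i, px i i')/K) * b i' + ((∑ j, qx j i')/K) * b i' := by
      intro i'
      show ((∑ i, px i i' + ∑ j, qx j i') / K) * b i' = _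
      ring
    rw [Finset.sum_congr rfl (fun i' _ => h i'), Finset.sum_add_distrib,
      avg_mul px b K, avg_mul qx b K]
  have splitY : ∀ b : Fin N → ℝ, ∑ j', b j' * yh j'
      = (∑ a, ∑ j', b j' * py a j') / K + (∑ a, ∑ j', b j' * qy a j') / K := by
    intro b
    have h : ∀ j', b j' * yh j'
        = b j' * ((∑ i, py i j')/K) + b j' * ((∑ j, qy j j')/K) := by
      intro j'
      show b j' * ((∑ i, py i j' + ∑ j, qy j j') / K) = _
      ring
    rw [Finset.sum_congr rfl (fun j' _ => h j'), Finset.sum_add_distrib,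
      avg_mul' py b K, avg_mul' qy b K]
  -- xh is an optimal strategy, yh likewise
  have hxhc : ∀ j, ∑ i, xh i * (G i j - ρ) ≤ 0 := by
    intro j
    rw [splitX (fun i => G i j - ρ)]
    have h1 : (∑ a, ∑ i', px a i' * (G i' j - ρ)) ≤ 0 :=
      Finset.sum_nonpos fun a _ => (hpxc a) j
    have h2 : (∑ a, ∑ i', qx a i' * (G i' j - ρ)) ≤ 0 :=
      Finset.sum_nonpos fun a _ => (hqxc a) j
    have := div_nonpos_of_nonpos_of_nonneg h1 hK0.le
    have := div_nonpos_of_nonpos_of_nonneg h2 hK0.le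
    linarith
  have hyhc : ∀ i, 0 ≤ ∑ j, (G i j - ρ) * yh j := by
    intro i
    rw [splitY (fun j => G i j - ρ)]
    have h1 : 0 ≤ (∑ a, ∑ j', (G i j' - ρ) * py a j') :=
      Finset.sum_nonneg fun a _ => (hpyc a) i
    have h2 : 0 ≤ (∑ a, ∑ j', (G i j' - ρ) * qy a j') :=
      Finset.sum_nonneg fun a _ => (hqyc a) i
    have := div_nonneg h1 hK0.le
    have := div_nonneg h2 hK0.le
    linarith
  -- strict complementarity off support
  have hstrictR : ∀ i, xh i = 0 → 0 < ∑ j, (G i j - ρ) * yh j := by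
    intro i hi
    have hnum : ∑ a, px a i + ∑ a, qx a i = 0 := by
      have := hi
      rw [hxh] at this
      exact (div_eq_zero_iff.mp this).resolve_right (ne_of_gt hK0)
    have hz1 : ∑ a, px a i = 0 := by
      have n1 : 0 ≤ ∑ a, px a i := Finset.sum_nonneg fun a _ => (hpx a).1 i
      have n2 : 0 ≤ ∑ a, qx a i := Finset.sum_nonneg fun a _ => (hqx a).1 i
      linarith
    have hpxii : px i i = 0 :=
      (Finset.sum_eq_zero_iff_of_nonneg (fun a _ => (hpx a).1 i)).mp hz1 i (Finset.mem_univ i)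
    have hkey := (hkeyR i).resolve_left (by rw [hpxii]; exact lt_irrefl 0)
    rw [splitY (fun j => G i j - ρ)]
    have h1 : 0 < (∑ a, ∑ j', (G i j' - ρ) * py a j') :=
      Finset.sum_pos' (fun a _ => (hpyc a) i) ⟨i, Finset.mem_univ i, hkey⟩
    have h2 : 0 ≤ (∑ a, ∑ j', (G i j' - ρ) * qy a j') :=
      Finset.sum_nonneg fun a _ => (hqyc a) i
    have := div_pos h1 hK0
    have := div_nonneg h2 hK0.le
    linarith
  have hstrictC : ∀ j, yh j = 0 → ∑ i, xh i * (G i j - ρ) < 0 := by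
    intro j hj
    have hnum : ∑ a, py a j + ∑ a, qy a j = 0 := by
      have := hj
      rw [hyh] at this
      exact (div_eq_zero_iff.mp this).resolve_right (ne_of_gt hK0)
    have hz2 : ∑ a, qy a j = 0 := by
      have n1 : 0 ≤ ∑ a, py a j := Finset.sum_nonneg fun a _ => (hpy a).1 j
      have n2 : 0 ≤ ∑ a, qy a j := Finset.sum_nonneg fun a _ => (hqy a).1 j
      linarith
    have hqyjj : qy j j = 0 :=
      (Finset.sum_eq_zero_iff_of_nonneg (fun a _ => (hqy a).1 j)).mp hz2 j (Finset.mem_univ j)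
    have hkey := (hkeyC j).resolve_left (by rw [hqyjj]; exact lt_irrefl 0)
    rw [splitX (fun i => G i j - ρ)]
    have h1 : (∑ a, ∑ i', px a i' * (G i' j - ρ)) ≤ 0 :=
      Finset.sum_nonpos fun a _ => (hpxc a) j
    have h2 : (∑ a, ∑ i', qx a i' * (G i' j - ρ)) < 0 := by
      have := Finset.sum_lt_sum (f := fun a => ∑ i', qx a i' * (G i' j - ρ))
        (g := fun _ => (0:ℝ)) (fun a _ => (hqxc a) j) ⟨j, Finset.mem_univ j, hkey⟩
      simpa using this
    have := div_nonpos_of_nonpos_of_nonneg h1 hK0.le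
    have := div_neg_of_neg_of_pos h2 hK0
    linarith
  -- the zero value
  set Z : ℝ := ∑ i, xh i * (∑ j, (G i j - ρ) * yh j) with hZ
  have hZrow : Z = payoff (fun i j => G i j - ρ) xh yh := (payoff_row _ xh yh).symm
  have hZcol : Z = ∑ j, (∑ i, xh i * (G i j - ρ)) * yh j := by
    rw [hZrow, payoff_col (fun i j => G i j - ρ)]
  have hZ1 : 0 ≤ Z := Finset.sum_nonneg fun i _ =>
    mul_nonneg (hxhmem.1 i) (hyhc i)
  have hZ2 : Z ≤ 0 := by
    rw [hZcol]
    exact Finset.sum_nonpos fun j _ => mul_nonpos_of_nonpos_of_nonneg (hxhc j) (hyhmem.1 j)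
  have hZ0 : Z = 0 := le_antisymm hZ2 hZ1
  have rowzero : ∀ i, xh i * (∑ j, (G i j - ρ) * yh j) = 0 := by
    intro i
    exact (Finset.sum_eq_zero_iff_of_nonneg
      (fun i _ => mul_nonneg (hxhmem.1 i) (hyhc i))).mp hZ0 i (Finset.mem_univ i)
  have colzero : ∀ j, (∑ i, xh i * (G i j - ρ)) * yh j = 0 := by
    intro j
    have h := hZcol ▸ hZ0
    exact (Finset.sum_eq_zero_iff_of_nonpos
      (fun j _ => mul_nonpos_of_nonpos_of_nonneg (hxhc j) (hyhmem.1 j))).mp h j (Finset.mem_univ j)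
  -- payoff value at equilibrium
  have hval : payoff G xh yh = ρ := by
    have h := payoff_shift G ρ xh yh hxhmem.2 hyhmem.2
    rw [← hZrow, hZ0] at h
    linarith
  refine ⟨xh, hxhmem, yh, hyhmem, ?_, ?_, ?_, ?_, ?_⟩
  · -- Nash
    intro x hx y hy
    constructor
    · have h1 : payoff (fun i j => G i j - ρ) xh y ≤ 0 := by
        rw [payoff_col (fun i j => G i j - ρ)]
        exact Finset.sum_nonpos fun j _ => mul_nonpos_of_nonpos_of_nonneg (hxhc j) (hy.1 j)
      rw [payoff_shift G ρ xh y hxhmem.2 hy.2] at h1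
      rw [hval]
      linarith
    · have h1 : 0 ≤ payoff (fun i j => G i j - ρ) x yh := by
        rw [payoff_row (fun i j => G i j - ρ)]
        exact Finset.sum_nonneg fun i _ => mul_nonneg (hx.1 i) (hyhc i)
      rw [payoff_shift G ρ x yh hx.2 hyhmem.2] at h1
      rw [hval]
      linarith
  · -- equality on support of xh
    intro i hi
    have h := rowzero i
    have h2 : ∑ j, (G i j - ρ) * yh j = 0 :=
      (mul_eq_zero.mp h).resolve_left (ne_of_gt hi)
    rw [rowA G ρ yh hyhmem.2 i] at h2
    linarith
  · -- strict off support of xh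
    intro i hi
    have h := hstrictR i hi
    rw [rowA G ρ yh hyhmem.2 i] at h
    linarith
  · -- equality on support of yh
    intro j hj
    have h := colzero j
    have h2 : ∑ i, xh i * (G i j - ρ) = 0 :=
      (mul_eq_zero.mp h).resolve_right (ne_of_gt hj)
    rw [colA G ρ xh hxhmem.2 j] at h2
    rw [sum_comm_mul]
    linarith
  · -- strict off support of yh
    intro j hj
    have h := hstrictC j hj
    rw [colA G ρ xh hxhmem.2 j] at h
    rw [sum_comm_mul]
    linarith
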